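/- For every k ≥ 2, every admissible sequence (j_1,…,j_{k−1}), and every positive integer i, the ratio of cylinder measures obtained by appending the digit j_k = h_{k−1}(j_{k−1}) + i satisfies λ(Δ_{j_1…j_{k−1}, h_{k−1}(j_{k−1})+i}) / λ(Δ_{j_1…j_{k−1}}) ≤ b_{k−1}(j_{k−1}) / (a_{k−1}(j_{k−1}) · j_{k−1} · (j_{k−1} − 1)). In particular the bound is uniform in i. -/

import Mathlib

open MeasureTheory Set

namespace ROE

/-- The `x`-sequence of the restricted Oppenheim algorithm applied to `x`:
index `k` corresponds to the paper's `x_{k+1}`, and `a k`, `b k` correspond to the paper's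
`a_{k+1}`, `b_{k+1}`.  So `X a b x 0 = x₁ = x` and
`x_{k+2} = (b_{k+1}(d_{k+1})/a_{k+1}(d_{k+1})) · (x_{k+1} - 1/d_{k+1})`. -/
noncomputable def X (a b : ℕ → ℕ → ℕ) (x : ℝ) : ℕ → ℝ
  | 0 => x
  | k + 1 =>
      let xk := X a b x k
      let d : ℕ := (⌊1 / xk⌋).toNat + 1
      ((b k d : ℝ) / (a k d : ℝ)) * (xk - 1 / (d : ℝ))

/-- The digit `d_{k+1}(x) = ⌊1/x_{k+1}⌋ + 1` of the restricted Oppenheim expansion. -/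
noncomputable def D (a b : ℕ → ℕ → ℕ) (x : ℝ) (k : ℕ) : ℕ :=
  (⌊1 / X a b x k⌋).toNat + 1

/-- The restricted Oppenheim expansion of `x` is infinite: all `x_n` lie in `(0,1)`. -/
def InfiniteROE (a b : ℕ → ℕ → ℕ) (x : ℝ) : Prop :=
  ∀ k, X a b x k ∈ Set.Ioo (0 : ℝ) 1

/-- The finite sequence `(j 0, …, j (n-1))` (the paper's `(j_1, …, j_n)`) is admissible:
`j_1 ≥ 2` and `j_{i+1} > h_i(j_i)`.  Here `h i` corresponds to the paper's `h_{i+1}`. -/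
def Admissible (h : ℕ → ℕ → ℕ) (n : ℕ) (j : ℕ → ℕ) : Prop :=
  2 ≤ j 0 ∧ ∀ i, i + 1 < n → h i (j i) < j (i + 1)

/-- The cylinder of rank `n` with base `(j 0, …, j (n-1))`: the set of `x ∈ (0,1)` with
infinite ROE whose first `n` digits are `j 0, …, j (n-1)`. -/
def cylinder (a b : ℕ → ℕ → ℕ) (n : ℕ) (j : ℕ → ℕ) : Set ℝ :=
  {x | x ∈ Set.Ioo (0 : ℝ) 1 ∧ InfiniteROE a b x ∧ ∀ i < n, D a b x i = j i}

/-- The difference-ROE digit `α_{k+1}(x)`: `α₁ = d₁ - 1`, `α_{k+2} = d_{k+2} - h_{k+1}(d_{k+1})`. -/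
noncomputable def alpha (a b h : ℕ → ℕ → ℕ) (x : ℝ) : ℕ → ℕ
  | 0 => D a b x 0 - 1
  | k + 1 => D a b x (k + 1) - h k (D a b x k)

/-- The digit sequence `d` reconstructed from a sequence `α` of difference-ROE symbols:
`d₁ = α₁ + 1`, `d_{k+2} = h_{k+1}(d_{k+1}) + α_{k+2}`. -/
def dSeq (h : ℕ → ℕ → ℕ) (α : ℕ → ℕ) : ℕ → ℕ
  | 0 => α 0 + 1
  | k + 1 => h k (dSeq h α k) + α (k + 1)

/-- The real number whose difference-ROE digits are `(α k)`:
`Φ(α) = Σ_{n≥1} (∏_{i=1}^{n-1} a_i(d_i)/b_i(d_i)) · (1/d_n)`. -/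
noncomputable def Phi (a b h : ℕ → ℕ → ℕ) (α : ℕ → ℕ) : ℝ :=
  ∑' n : ℕ, (∏ i ∈ Finset.range n, (a i (dSeq h α i) : ℝ) / (b i (dSeq h α i) : ℝ)) *
    (1 / (dSeq h α n : ℝ))

lemma X_succ (a b : ℕ → ℕ → ℕ) (x : ℝ) (k : ℕ) :
    X a b x (k + 1) =
      ((b k (D a b x k) : ℝ) / (a k (D a b x k) : ℝ)) * (X a b x k - 1 / (D a b x k : ℝ)) := rfl

lemma D_ge_two (a b : ℕ → ℕ → ℕ) {x : ℝ} {k : ℕ} (hx : X a b x k ∈ Set.Ioo (0:ℝ) 1) :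
    2 ≤ D a b x k := by
  have h1 : (1:ℝ) < 1 / X a b x k := by
    rw [lt_div_iff₀ hx.1]; linarith [hx.2]
  have h2 : (1:ℤ) ≤ ⌊1 / X a b x k⌋ := Int.le_floor.mpr (by exact_mod_cast h1.le)
  unfold D; omega

lemma X_mem_Ioc (a b : ℕ → ℕ → ℕ) {x : ℝ} {k : ℕ} (hx : X a b x k ∈ Set.Ioo (0:ℝ) 1) :
    X a b x k ∈ Set.Ioc (1 / (D a b x k : ℝ)) (1 / ((D a b x k : ℝ) - 1)) := by
  set y := X a b x k with hy
  have h1 : (1:ℝ) < 1 / y := by rw [lt_div_iff₀ hx.1]; linarith [hx.2]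
  have h2 : (1:ℤ) ≤ ⌊1 / y⌋ := Int.le_floor.mpr (by exact_mod_cast h1.le)
  have hD : (D a b x k : ℝ) = (⌊1 / y⌋ : ℝ) + 1 := by
    have ht : (⌊1/y⌋.toNat : ℤ) = ⌊1/y⌋ := Int.toNat_of_nonneg (by omega)
    have ht' : ((⌊1/y⌋.toNat : ℕ) : ℝ) = (⌊1/y⌋ : ℝ) := by exact_mod_cast congrArg (fun z : ℤ => (z : ℝ)) ht
    unfold D
    rw [← hy, Nat.cast_add, Nat.cast_one, ht']
  have hfl : (⌊1 / y⌋ : ℝ) ≤ 1 / y := Int.floor_le _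
  have hfl2 : 1 / y < (⌊1 / y⌋ : ℝ) + 1 := Int.lt_floor_add_one _
  have hfpos : (0:ℝ) < (⌊1 / y⌋ : ℝ) := by exact_mod_cast h2
  have hyy : y * (1 / y) = 1 := by rw [mul_one_div, div_self hx.1.ne']
  constructor
  · rw [hD, div_lt_iff₀ (by linarith)]
    nlinarith [hx.1]
  · rw [hD, le_div_iff₀ (by linarith : (0:ℝ) < (⌊1 / y⌋ : ℝ) + 1 - 1)]
    nlinarith [hx.1]

lemma D_eq (a b : ℕ → ℕ → ℕ) {x : ℝ} {k : ℕ} {d : ℕ} (hd : 2 ≤ d)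
    (hx : X a b x k ∈ Set.Ioc (1/(d:ℝ)) (1/((d:ℝ)-1))) : D a b x k = d := by
  set y := X a b x k with hy
  have hd1 : (1:ℝ) ≤ (d:ℝ) - 1 := by
    have : (2:ℝ) ≤ (d:ℝ) := by exact_mod_cast hd
    linarith
  have hy0 : 0 < y := lt_trans (by positivity) hx.1
  have hd0 : (0:ℝ) < (d:ℝ) := by exact_mod_cast (by omega : 0 < d)
  have hfl : ⌊1 / y⌋ = (d:ℤ) - 1 := by
    have h2' : y * ((d:ℝ) - 1) ≤ 1 := (le_div_iff₀ (by linarith)).mp hx.2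
    have h1' : 1 < y * (d:ℝ) := (div_lt_iff₀ hd0).mp hx.1
    rw [Int.floor_eq_iff]
    push_cast
    constructor
    · rw [le_div_iff₀ hy0]
      nlinarith
    · rw [div_lt_iff₀ hy0]
      nlinarith
  unfold D; rw [← hy, hfl]; omega

-- core arithmetic
section Core
variable {A B H d : ℕ}

lemma cast_key (hd : 2 ≤ d) (hab : B * H = A * d * (d - 1)) :
    (B:ℝ) * (H:ℝ) = (A:ℝ) * (d:ℝ) * ((d:ℝ) - 1) := by
  have h1 : ((d - 1 : ℕ) : ℝ) = (d:ℝ) - 1 := by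
    have : 1 ≤ d := by omega
    push_cast [this]; ring
  rw [← h1]
  exact_mod_cast congrArg (fun n : ℕ => (n:ℝ)) hab

lemma ident (hd : 2 ≤ d) (hA : 0 < A) (hB : 0 < B) (hH : 0 < H)
    (hab : B * H = A * d * (d - 1)) :
    1/((d:ℝ)-1) - 1/(d:ℝ) = ((A:ℝ)/(B:ℝ)) * (1/(H:ℝ)) := by
  have key := cast_key hd hab
  have hd2 : (2:ℝ) ≤ (d:ℝ) := by exact_mod_cast hd
  have hA0 : (0:ℝ) < A := by exact_mod_cast hA
  have hB0 : (0:ℝ) < B := by exact_mod_cast hB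
  have hH0 : (0:ℝ) < H := by exact_mod_cast hH
  have hd0 : ((d:ℝ) - 1) ≠ 0 := by nlinarith [hd2]
  have hdd : (d:ℝ) ≠ 0 := by positivity
  have e1 : 1/((d:ℝ)-1) - 1/(d:ℝ) = 1/((d:ℝ)*((d:ℝ)-1)) := by
    field_simp
    ring
  have e3 : (A:ℝ)/((A:ℝ)*(d:ℝ)*((d:ℝ)-1)) = 1/((d:ℝ)*((d:ℝ)-1)) := by
    rw [mul_assoc, div_mul_eq_div_div, div_self hA0.ne']
  rw [e1, div_mul_div_comm, mul_one, key, e3]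

lemma step_mem (hd : 2 ≤ d) (hA : 0 < A) (hB : 0 < B) (hH : 0 < H)
    (hab : B * H = A * d * (d - 1)) {s : ℝ} (hs : s ∈ Set.Ioc 0 (1/(H:ℝ))) :
    1/(d:ℝ) + ((A:ℝ)/(B:ℝ)) * s ∈ Set.Ioc (1/(d:ℝ)) (1/((d:ℝ)-1)) := by
  have hA0 : (0:ℝ) < A := by exact_mod_cast hA
  have hB0 : (0:ℝ) < B := by exact_mod_cast hB
  have hr : (0:ℝ) < (A:ℝ)/(B:ℝ) := by positivity
  constructor
  · nlinarith [hs.1]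
  · have h1 : ((A:ℝ)/(B:ℝ)) * s ≤ ((A:ℝ)/(B:ℝ)) * (1/(H:ℝ)) :=
      mul_le_mul_of_nonneg_left hs.2 hr.le
    have h2 := ident hd hA hB hH hab
    linarith

lemma step_inv_mem (hd : 2 ≤ d) (hA : 0 < A) (hB : 0 < B) (hH : 0 < H)
    (hab : B * H = A * d * (d - 1)) {y : ℝ} (hy : y ∈ Set.Ioc (1/(d:ℝ)) (1/((d:ℝ)-1))) :
    ((B:ℝ)/(A:ℝ)) * (y - 1/(d:ℝ)) ∈ Set.Ioc 0 (1/(H:ℝ)) := by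
  have hA0 : (0:ℝ) < A := by exact_mod_cast hA
  have hB0 : (0:ℝ) < B := by exact_mod_cast hB
  have hH0 : (0:ℝ) < H := by exact_mod_cast hH
  have hr : (0:ℝ) < (B:ℝ)/(A:ℝ) := by positivity
  have h2 := ident hd hA hB hH hab
  constructor
  · have : 0 < y - 1/(d:ℝ) := by linarith [hy.1]
    positivity
  · have h1 : y - 1/(d:ℝ) ≤ ((A:ℝ)/(B:ℝ)) * (1/(H:ℝ)) := by linarith [hy.2]
    have h3 : ((B:ℝ)/(A:ℝ)) * (y - 1/(d:ℝ)) ≤ ((B:ℝ)/(A:ℝ)) * (((A:ℝ)/(B:ℝ)) * (1/(H:ℝ))) :=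
      mul_le_mul_of_nonneg_left h1 hr.le
    have h4 : ((B:ℝ)/(A:ℝ)) * (((A:ℝ)/(B:ℝ)) * (1/(H:ℝ))) = 1/(H:ℝ) := by
      field_simp
    linarith

end Core

-- shift lemmas
lemma X_shift (a b : ℕ → ℕ → ℕ) (x : ℝ) (n : ℕ) :
    ∀ k, X a b x (n + k) = X (fun i => a (n + i)) (fun i => b (n + i)) (X a b x n) k := by
  intro k
  induction k with
  | zero => rfl
  | succ k ih =>
    show X a b x ((n + k) + 1) = _
    have hD : D a b x (n+k) = D (fun i => a (n+i)) (fun i => b (n+i)) (X a b x n) k := by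
      unfold D; rw [ih]
    rw [X_succ, X_succ, ih, hD]

lemma D_shift (a b : ℕ → ℕ → ℕ) (x : ℝ) (n k : ℕ) :
    D a b x (n + k) = D (fun i => a (n + i)) (fun i => b (n + i)) (X a b x n) k := by
  unfold D
  rw [X_shift]

-- step equation (inverse form)
lemma step_eq (a b : ℕ → ℕ → ℕ) {x : ℝ} {k : ℕ}
    (ha : 0 < a k (D a b x k)) (hb : 0 < b k (D a b x k)) :
    X a b x k = 1/(D a b x k : ℝ) +
      ((a k (D a b x k) : ℝ)/(b k (D a b x k) : ℝ)) * X a b x (k+1) := by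
  have hA0 : ((a k (D a b x k) : ℝ)) ≠ 0 := Nat.cast_ne_zero.mpr ha.ne'
  have hB0 : ((b k (D a b x k) : ℝ)) ≠ 0 := Nat.cast_ne_zero.mpr hb.ne'
  rw [X_succ]
  field_simp
  ring

-- reconstruction from digit list
noncomputable def reconL (a b : ℕ → ℕ → ℕ) : ℕ → List ℕ → ℝ → ℝ
  | _, [], t => t
  | k, d :: l, t => 1 / (d : ℝ) + ((a k d : ℝ) / (b k d : ℝ)) * reconL a b (k + 1) l t

lemma reconL_eq (a b : ℕ → ℕ → ℕ)
    (ha : ∀ k j, 2 ≤ j → 0 < a k j) (hb : ∀ k j, 2 ≤ j → 0 < b k j) :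
    ∀ (n s : ℕ) (x : ℝ), (∀ k, k < n → X a b x (s + k) ∈ Set.Ioo (0:ℝ) 1) →
      X a b x s = reconL a b s ((List.range n).map (fun k => D a b x (s + k))) (X a b x (s + n)) := by
  intro n
  induction n with
  | zero => intro s x _; simp [reconL]
  | succ n ih =>
    intro s x hx
    have h0 : X a b x s ∈ Set.Ioo (0:ℝ) 1 := by simpa using hx 0 (by omega)
    have hd2 : 2 ≤ D a b x s := D_ge_two a b h0
    have hrec := ih (s+1) x (fun k hk => by
      have := hx (k+1) (by omega)
      rwa [show s + (k+1) = (s+1) + k by omega] at this)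
    rw [List.range_succ_eq_map, List.map_cons, List.map_map]
    have hmap : (List.range n).map ((fun k => D a b x (s + k)) ∘ Nat.succ)
        = (List.range n).map (fun k => D a b x ((s+1) + k)) := by
      apply List.map_congr_left
      intro k _
      show D a b x (s + (k+1)) = D a b x ((s+1)+k)
      congr 1
      omega
    rw [hmap, reconL]
    simp only [Nat.add_zero]
    rw [show s + (n+1) = (s+1) + n by omega, ← hrec]
    exact step_eq a b (ha _ _ hd2) (hb _ _ hd2)

lemma bad_countable (a b h : ℕ → ℕ → ℕ)
    (ha : ∀ k j, 2 ≤ j → 0 < a k j) (hb : ∀ k j, 2 ≤ j → 0 < b k j)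
    (hpos : ∀ k j, 2 ≤ j → 0 < h k j)
    (hab : ∀ k j, 2 ≤ j → b k j * h k j = a k j * j * (j - 1)) :
    Set.Countable {x : ℝ | x ∈ Set.Ioo (0:ℝ) 1 ∧ ¬ InfiniteROE a b x} := by
  apply Set.Countable.mono _ (Set.countable_range (fun l : List ℕ => reconL a b 0 l 1))
  rintro x ⟨hx01, hinf⟩
  have hex : ∃ k, X a b x k ∉ Set.Ioo (0:ℝ) 1 := by
    by_contra hc
    push_neg at hc
    exact hinf hc
  have hn := Nat.find_spec hex
  have hlt : ∀ k, k < Nat.find hex → X a b x k ∈ Set.Ioo (0:ℝ) 1 := by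
    intro k hk
    by_contra hc
    exact Nat.find_min hex hk hc
  have hn0 : Nat.find hex ≠ 0 := by
    intro h0
    rw [h0] at hn
    exact hn hx01
  obtain ⟨n', hn' ⟩ : ∃ n', Nat.find hex = n' + 1 := ⟨Nat.find hex - 1, by omega⟩
  rw [hn'] at hn hlt
  have hxn' : X a b x n' ∈ Set.Ioo (0:ℝ) 1 := hlt n' (by omega)
  have hd2 : 2 ≤ D a b x n' := D_ge_two a b hxn'
  have hmem := step_inv_mem hd2 (ha n' _ hd2) (hb n' _ hd2) (hpos n' _ hd2) (hab n' _ hd2)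
    (X_mem_Ioc a b hxn')
  rw [← X_succ] at hmem
  have hH1 : (1:ℝ) ≤ (h n' (D a b x n') : ℝ) := by exact_mod_cast hpos _ _ hd2
  have hle1 : X a b x (n'+1) ≤ 1 := by
    have h2 : 1/(h n' (D a b x n') : ℝ) ≤ 1 := by
      rw [div_le_one (by linarith)]; linarith
    linarith [hmem.2]
  have heq1 : X a b x (n'+1) = 1 := by
    rcases lt_or_eq_of_le hle1 with hlt1 | he
    · exact absurd ⟨hmem.1, hlt1⟩ hn
    · exact he
  refine ⟨(List.range (n'+1)).map (fun k => D a b x k), ?_⟩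
  have := reconL_eq a b ha hb (n'+1) 0 x (fun k hk => by simpa using hlt k hk)
  simp only [Nat.zero_add] at this
  rw [heq1] at this
  simpa [X] using this.symm

-- Y : reconstruction from digit function with fuel
noncomputable def Y (a b : ℕ → ℕ → ℕ) (j : ℕ → ℕ) : ℕ → ℕ → ℝ → ℝ
  | _, 0, t => t
  | k, r + 1, t => 1 / (j k : ℝ) + ((a k (j k) : ℝ) / (b k (j k) : ℝ)) * Y a b j (k + 1) r t

lemma Y_sub (a b : ℕ → ℕ → ℕ) (j : ℕ → ℕ) :
    ∀ (r k : ℕ) (t t' : ℝ), Y a b j k r t' - Y a b j k r t =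
      (∏ i ∈ Finset.range r, ((a (k+i) (j (k+i)) : ℝ) / (b (k+i) (j (k+i)) : ℝ))) * (t' - t) := by
  intro r
  induction r with
  | zero => intro k t t'; simp [Y]
  | succ r ih =>
    intro k t t'
    have hprod : (∏ i ∈ Finset.range (r+1), ((a (k+i) (j (k+i)) : ℝ) / (b (k+i) (j (k+i)) : ℝ)))
        = (∏ i ∈ Finset.range r, ((a ((k+1)+i) (j ((k+1)+i)) : ℝ) / (b ((k+1)+i) (j ((k+1)+i)) : ℝ)))
          * ((a k (j k) : ℝ) / (b k (j k) : ℝ)) := by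
      rw [Finset.prod_range_succ', Nat.add_zero]
      congr 1
      apply Finset.prod_congr rfl
      intro i _
      rw [show k + (i+1) = (k+1) + i by omega]
    show (1 / (j k : ℝ) + ((a k (j k) : ℝ)/(b k (j k) : ℝ)) * Y a b j (k+1) r t')
        - (1 / (j k : ℝ) + ((a k (j k) : ℝ)/(b k (j k) : ℝ)) * Y a b j (k+1) r t) = _
    rw [hprod]
    have e := ih (k+1) t t'
    linear_combination ((a k (j k) : ℝ)/(b k (j k) : ℝ)) * e

lemma j_ge_two {h : ℕ → ℕ → ℕ} (hpos : ∀ k j, 2 ≤ j → 0 < h k j)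
    {n : ℕ} {j : ℕ → ℕ} (hadm : Admissible h n j) : ∀ i, i < n → 2 ≤ j i := by
  intro i
  induction i with
  | zero => exact fun _ => hadm.1
  | succ i ih =>
    intro hi
    have h2 : 2 ≤ j i := ih (by omega)
    have h3 := hadm.2 i hi
    have h4 := hpos i (j i) h2
    omega

section Struct

variable {a b h : ℕ → ℕ → ℕ}
variable (ha : ∀ k j, 2 ≤ j → 0 < a k j) (hb : ∀ k j, 2 ≤ j → 0 < b k j)
    (hpos : ∀ k j, 2 ≤ j → 0 < h k j)
    (hab : ∀ k j, 2 ≤ j → b k j * h k j = a k j * j * (j - 1))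
variable {n : ℕ} {j : ℕ → ℕ} (hadm : Admissible h n j) (hn : 1 ≤ n)
variable {t : ℝ} (ht : t ∈ Set.Ioc 0 (1/(h (n-1) (j (n-1)) : ℝ)))

include ha hb hpos hab hadm hn ht in
lemma tail_bound :
    ∀ d k, n = k + d + 1 → Y a b j (k+1) d t ∈ Set.Ioc 0 (1/(h k (j k) : ℝ)) := by
  intro d
  induction d with
  | zero =>
    intro k hk
    show t ∈ _
    rw [show k = n - 1 by omega]
    exact ht
  | succ d ih =>
    intro k hk
    have hk1 : k + 1 < n := by omega
    have hj1 : 2 ≤ j (k+1) := j_ge_two hpos hadm (k+1) hk1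
    have hjk : 2 ≤ j k := j_ge_two hpos hadm k (by omega)
    have hIH := ih (k+1) (by omega)
    show 1 / (j (k+1) : ℝ) + ((a (k+1) (j (k+1)) : ℝ)/(b (k+1) (j (k+1)) : ℝ)) *
        Y a b j (k+2) d t ∈ _
    have hmem := step_mem hj1 (ha (k+1) _ hj1) (hb (k+1) _ hj1) (hpos (k+1) _ hj1)
      (hab (k+1) _ hj1) hIH
    have hH : 0 < h k (j k) := hpos k _ hjk
    have hH' : (0:ℝ) < (h k (j k) : ℝ) := by exact_mod_cast hH
    constructor
    · exact lt_trans (by positivity) hmem.1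
    · refine hmem.2.trans ?_
      apply one_div_le_one_div_of_le hH'
      have := hadm.2 k hk1
      have : (h k (j k) : ℝ) + 1 ≤ (j (k+1) : ℝ) := by exact_mod_cast this
      linarith

include ha hb hpos hab hadm hn ht in
lemma Y_mem_Ioc : ∀ k, k < n →
    Y a b j k (n - k) t ∈ Set.Ioc (1/(j k : ℝ)) (1/((j k : ℝ) - 1)) := by
  intro k hk
  have hjk : 2 ≤ j k := j_ge_two hpos hadm k hk
  rw [show n - k = (n - k - 1) + 1 by omega]
  show 1 / (j k : ℝ) + ((a k (j k) : ℝ)/(b k (j k) : ℝ)) * Y a b j (k+1) (n-k-1) t ∈ _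
  exact step_mem hjk (ha k _ hjk) (hb k _ hjk) (hpos k _ hjk) (hab k _ hjk)
    (tail_bound ha hb hpos hab hadm hn ht (n-k-1) k (by omega))

end Struct

lemma X_eq_Y {a b : ℕ → ℕ → ℕ}
    (ha : ∀ k j, 2 ≤ j → 0 < a k j) (hb : ∀ k j, 2 ≤ j → 0 < b k j) (j : ℕ → ℕ) :
    ∀ (r k : ℕ) (x : ℝ), (∀ i, i < r → X a b x (k+i) ∈ Set.Ioo (0:ℝ) 1) →
      (∀ i, i < r → D a b x (k+i) = j (k+i)) →
      X a b x k = Y a b j k r (X a b x (k+r)) := by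
  intro r
  induction r with
  | zero => intro k x _ _; rfl
  | succ r ih =>
    intro k x hx hD
    have h0 : X a b x k ∈ Set.Ioo (0:ℝ) 1 := by simpa using hx 0 (by omega)
    have hd0 : D a b x k = j k := by simpa using hD 0 (by omega)
    have hd2 : 2 ≤ D a b x k := D_ge_two a b h0
    have hih := ih (k+1) x
      (fun i hi => by
        have := hx (i+1) (by omega)
        rwa [show k + (i+1) = (k+1) + i by omega] at this)
      (fun i hi => by
        have := hD (i+1) (by omega)
        rwa [show k + (i+1) = (k+1) + i by omega] at this)
    calc X a b x k
        = 1/(D a b x k : ℝ) + ((a k (D a b x k) : ℝ)/(b k (D a b x k) : ℝ)) * X a b x (k+1) :=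
          step_eq a b (ha k _ hd2) (hb k _ hd2)
      _ = 1/(j k : ℝ) + ((a k (j k) : ℝ)/(b k (j k) : ℝ)) *
            Y a b j (k+1) r (X a b x ((k+1)+r)) := by rw [hd0, hih]
      _ = Y a b j k (r+1) (X a b x (k+(r+1))) := by
          rw [show (k+1)+r = k+(r+1) by omega]
          rfl

lemma cylinder_volume (a b h : ℕ → ℕ → ℕ)
    (ha : ∀ k j, 2 ≤ j → 0 < a k j) (hb : ∀ k j, 2 ≤ j → 0 < b k j)
    (hpos : ∀ k j, 2 ≤ j → 0 < h k j)
    (hab : ∀ k j, 2 ≤ j → b k j * h k j = a k j * j * (j - 1))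
    (n : ℕ) (hn : 1 ≤ n) (j : ℕ → ℕ) (hadm : Admissible h n j) :
    volume (cylinder a b n j) =
      ENNReal.ofReal ((∏ i ∈ Finset.range n, ((a i (j i) : ℝ) / (b i (j i) : ℝ))) *
        (1 / (h (n-1) (j (n-1)) : ℝ))) := by
  set u : ℝ := 1 / (h (n-1) (j (n-1)) : ℝ) with hu
  set G : Set ℝ := {t : ℝ | InfiniteROE (fun i => a (n+i)) (fun i => b (n+i)) t} with hG
  set ρ : ℝ := ∏ i ∈ Finset.range n, ((a i (j i) : ℝ) / (b i (j i) : ℝ)) with hρ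
  set c : ℝ := Y a b j 0 n 0 with hc
  -- basic positivity
  have hj2 : ∀ i, i < n → 2 ≤ j i := j_ge_two hpos hadm
  have hjn : 2 ≤ j (n-1) := hj2 (n-1) (by omega)
  have hH : 0 < h (n-1) (j (n-1)) := hpos _ _ hjn
  have hH' : (0:ℝ) < (h (n-1) (j (n-1)) : ℝ) := by exact_mod_cast hH
  have hH1 : (1:ℝ) ≤ (h (n-1) (j (n-1)) : ℝ) := by exact_mod_cast hH
  have hu0 : 0 < u := by rw [hu]; positivity
  have hu1 : u ≤ 1 := by rw [hu, div_le_one hH']; exact hH1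
  have hρ0 : 0 < ρ := by
    rw [hρ]
    apply Finset.prod_pos
    intro i hi
    have h2 : 2 ≤ j i := hj2 i (Finset.mem_range.mp hi)
    have := ha i _ h2
    have := hb i _ h2
    positivity
  have hY : ∀ t : ℝ, Y a b j 0 n t = c + ρ * t := by
    intro t
    have := Y_sub a b j n 0 0 t
    simp only [Nat.zero_add, sub_zero] at this
    rw [hc, hρ]
    linarith [this]
  -- affine image of intervals
  have himgIoc : (fun t : ℝ => c + ρ * t) '' Set.Ioc 0 u = Set.Ioc c (c + ρ * u) := by
    rw [show (fun t : ℝ => c + ρ * t) = (fun y : ℝ => c + y) ∘ (fun t : ℝ => ρ * t) from rfl,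
      Set.image_comp, Set.image_mul_left_Ioc hρ0, Set.image_const_add_Ioc]
    rw [mul_zero, add_zero]
  have himgIoo : (fun t : ℝ => c + ρ * t) '' Set.Ioo 0 u = Set.Ioo c (c + ρ * u) := by
    rw [show (fun t : ℝ => c + ρ * t) = (fun y : ℝ => c + y) ∘ (fun t : ℝ => ρ * t) from rfl,
      Set.image_comp, Set.image_mul_left_Ioo hρ0, Set.image_const_add_Ioo]
    rw [mul_zero, add_zero]
  -- upper inclusion
  have hupper : cylinder a b n j ⊆ (fun t : ℝ => c + ρ * t) '' Set.Ioc 0 u := by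
    rintro x ⟨hx01, hinf, hdig⟩
    refine ⟨X a b x n, ?_, ?_⟩
    · have hxm : X a b x (n-1) ∈ Set.Ioo (0:ℝ) 1 := hinf (n-1)
      have hd : D a b x (n-1) = j (n-1) := hdig (n-1) (by omega)
      have hmem := X_mem_Ioc a b hxm
      rw [hd] at hmem
      have hstep := step_inv_mem hjn (ha (n-1) _ hjn) (hb (n-1) _ hjn) (hpos (n-1) _ hjn)
        (hab (n-1) _ hjn) hmem
      have hXn : X a b x n = ((b (n-1) (j (n-1)) : ℝ)/(a (n-1) (j (n-1)) : ℝ)) *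
          (X a b x (n-1) - 1/(j (n-1) : ℝ)) := by
        conv_lhs => rw [show n = (n-1) + 1 by omega]
        rw [X_succ, hd]
      rw [hXn]
      exact hstep
    · show c + ρ * X a b x n = x
      rw [← hY]
      have := X_eq_Y ha hb j n 0 x (fun i hi => by simpa using hinf i)
        (fun i hi => by simpa using hdig i hi)
      simp only [Nat.zero_add] at this
      exact this.symm
  -- lower inclusion
  have hlower : (fun t : ℝ => c + ρ * t) '' (Set.Ioo 0 u ∩ G) ⊆ cylinder a b n j := by
    rintro _ ⟨t, ⟨⟨ht0, htu⟩, htG⟩, rfl⟩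
    have htIoc : t ∈ Set.Ioc 0 u := ⟨ht0, htu.le⟩
    have ht1 : t < 1 := by
      have := htG 0
      exact this.2
    show c + ρ * t ∈ cylinder a b n j
    rw [show c + ρ * t = Y a b j 0 n t from (hY t).symm]
    set x := Y a b j 0 n t with hx
    have hXY : ∀ k, k ≤ n → X a b x k = Y a b j k (n - k) t := by
      intro k
      induction k with
      | zero => intro _; rw [Nat.sub_zero]; rfl
      | succ k ihk =>
        intro hk
        have hk' : k < n := by omega
        have hXk : X a b x k = Y a b j k (n-k) t := ihk (by omega)
        have hjk : 2 ≤ j k := hj2 k hk'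
        have hYk := Y_mem_Ioc ha hb hpos hab hadm hn htIoc k hk'
        have hD : D a b x k = j k := D_eq a b hjk (by rw [hXk]; exact hYk)
        have hA0 : ((a k (j k) : ℝ)) ≠ 0 := Nat.cast_ne_zero.mpr (ha k _ hjk).ne'
        have hB0 : ((b k (j k) : ℝ)) ≠ 0 := Nat.cast_ne_zero.mpr (hb k _ hjk).ne'
        rw [X_succ, hD, hXk]
        rw [show n - k = (n-(k+1)) + 1 by omega]
        show ((b k (j k) : ℝ)/(a k (j k) : ℝ)) *
            ((1/(j k : ℝ) + ((a k (j k) : ℝ)/(b k (j k) : ℝ)) * Y a b j (k+1) (n-(k+1)) t)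
              - 1/(j k : ℝ)) = _
        field_simp
        ring
    have hdig : ∀ k, k < n → D a b x k = j k := by
      intro k hk
      have hjk : 2 ≤ j k := hj2 k hk
      have hYk := Y_mem_Ioc ha hb hpos hab hadm hn htIoc k hk
      exact D_eq a b hjk (by rw [hXY k hk.le]; exact hYk)
    have hXn : X a b x n = t := by
      have := hXY n le_rfl
      rwa [Nat.sub_self] at this
    have hstrict : ∀ k, k ≤ n → X a b x k ∈ Set.Ioo (0:ℝ) 1 := by
      intro k hk
      rcases eq_or_lt_of_le hk with rfl | hk'
      · rw [hXn]; exact ⟨ht0, ht1⟩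
      · rw [hXY k hk]
        have hYm := Y_mem_Ioc ha hb hpos hab hadm hn htIoc k hk'
        have hjk : 2 ≤ j k := hj2 k hk'
        have hjk' : (2:ℝ) ≤ (j k : ℝ) := by exact_mod_cast hjk
        constructor
        · exact lt_trans (by positivity) hYm.1
        · -- strict: Y k (n-k) t < Y k (n-k) u ≤ 1/(j k - 1) ≤ 1
          have hYmu := Y_mem_Ioc ha hb hpos hab hadm hn
            (show u ∈ Set.Ioc 0 u from ⟨hu0, le_refl u⟩) k hk'
          have hsub := Y_sub a b j (n-k) k t u
          have hρk : 0 < ∏ i ∈ Finset.range (n-k),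
              ((a (k+i) (j (k+i)) : ℝ) / (b (k+i) (j (k+i)) : ℝ)) := by
            apply Finset.prod_pos
            intro i hi
            have hlt : k + i < n := by
              have := Finset.mem_range.mp hi
              omega
            have h2 : 2 ≤ j (k+i) := hj2 _ hlt
            have := ha (k+i) _ h2
            have := hb (k+i) _ h2
            positivity
          have hmono : Y a b j k (n-k) t < Y a b j k (n-k) u := by nlinarith
          have hle : Y a b j k (n-k) u ≤ 1/((j k : ℝ) - 1) := hYmu.2
          have : 1/((j k : ℝ) - 1) ≤ 1 := by
            rw [div_le_one (by linarith)]
            linarith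
          linarith
    refine ⟨hstrict 0 (by omega), ?_, hdig⟩
    intro k
    rcases le_or_gt k n with hk | hk
    · exact hstrict k hk
    · rw [show k = n + (k - n) by omega, X_shift, hXn]
      exact htG (k - n)
  -- measures
  have hvol_le : volume (cylinder a b n j) ≤ ENNReal.ofReal (ρ * u) := by
    refine le_trans (measure_mono hupper) ?_
    rw [himgIoc, Real.volume_Ioc]
    apply le_of_eq
    congr 1
    ring
  have hcount : Set.Countable ((fun t : ℝ => c + ρ * t) '' (Set.Ioo 0 u \ G)) := by
    apply Set.Countable.image
    apply Set.Countable.mono _ (bad_countable (fun i => a (n+i)) (fun i => b (n+i))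
      (fun i => h (n+i)) (fun k j hj => ha _ j hj) (fun k j hj => hb _ j hj)
      (fun k j hj => hpos _ j hj) (fun k j hj => hab _ j hj))
    rintro t ⟨⟨ht0, htu⟩, htG⟩
    exact ⟨⟨ht0, lt_of_lt_of_le htu hu1⟩, htG⟩
  have hvol_ge : ENNReal.ofReal (ρ * u) ≤ volume (cylinder a b n j) := by
    have h1 : Set.Ioo (0:ℝ) u ⊆ (Set.Ioo 0 u ∩ G) ∪ (Set.Ioo 0 u \ G) := by
      intro t ht
      by_cases htG : t ∈ G
      · exact Or.inl ⟨ht, htG⟩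
      · exact Or.inr ⟨ht, htG⟩
    have h2 : (fun t : ℝ => c + ρ * t) '' Set.Ioo 0 u ⊆
        ((fun t : ℝ => c + ρ * t) '' (Set.Ioo 0 u ∩ G)) ∪
        ((fun t : ℝ => c + ρ * t) '' (Set.Ioo 0 u \ G)) := by
      rw [← Set.image_union]
      exact Set.image_mono h1
    have h3 : volume ((fun t : ℝ => c + ρ * t) '' Set.Ioo 0 u) = ENNReal.ofReal (ρ * u) := by
      rw [himgIoo, Real.volume_Ioo]
      congr 1
      ring
    calc ENNReal.ofReal (ρ * u) = volume ((fun t : ℝ => c + ρ * t) '' Set.Ioo 0 u) := h3.symm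
      _ ≤ volume ((fun t : ℝ => c + ρ * t) '' (Set.Ioo 0 u ∩ G)) +
          volume ((fun t : ℝ => c + ρ * t) '' (Set.Ioo 0 u \ G)) :=
        le_trans (measure_mono h2) (measure_union_le _ _)
      _ = volume ((fun t : ℝ => c + ρ * t) '' (Set.Ioo 0 u ∩ G)) := by
        rw [Set.Countable.measure_zero hcount, add_zero]
      _ ≤ volume (cylinder a b n j) := measure_mono hlower
  exact le_antisymm hvol_le hvol_ge

/-- For every `k ≥ 2` (here `k = m + 1` with `m ≥ 1`), every admissible
`(j_1, …, j_{k-1})` and every positive integer `i`, appending the digit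
`j_k = h_{k-1}(j_{k-1}) + i` gives
`λ(Δ_{j_1…j_{k-1}, h_{k-1}(j_{k-1}) + i}) / λ(Δ_{j_1…j_{k-1}})
  ≤ b_{k-1}(j_{k-1}) / (a_{k-1}(j_{k-1}) · j_{k-1} · (j_{k-1} - 1))`,
a bound uniform in `i`. -/
theorem cylinder_ratio_bound (a b h : ℕ → ℕ → ℕ)
    (ha : ∀ k j, 2 ≤ j → 0 < a k j) (hb : ∀ k j, 2 ≤ j → 0 < b k j)
    (hpos : ∀ k j, 2 ≤ j → 0 < h k j)
    (hab : ∀ k j, 2 ≤ j → b k j * h k j = a k j * j * (j - 1))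
    (m : ℕ) (hm : 1 ≤ m) (j : ℕ → ℕ) (hadm : Admissible h m j)
    (i : ℕ) (hi : 1 ≤ i) :
    volume (cylinder a b (m + 1) (Function.update j m (h (m - 1) (j (m - 1)) + i))) /
        volume (cylinder a b m j) ≤
      ENNReal.ofReal ((b (m - 1) (j (m - 1)) : ℝ) /
        ((a (m - 1) (j (m - 1)) : ℝ) * (j (m - 1) : ℝ) * ((j (m - 1) : ℝ) - 1))) := by
  set H : ℕ := h (m - 1) (j (m - 1)) with hH
  set J : ℕ := H + i with hJ
  set j' : ℕ → ℕ := Function.update j m J with hj'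
  have hjm : 2 ≤ j (m - 1) := j_ge_two hpos hadm (m - 1) (by omega)
  have hHpos : 0 < H := hpos _ _ hjm
  have hJ2 : 2 ≤ J := by omega
  have hadm' : Admissible h (m + 1) j' := by
    constructor
    · rw [hj', Function.update_of_ne (by omega : (0:ℕ) ≠ m)]
      exact hadm.1
    · intro i' hi'
      rcases lt_or_eq_of_le (by omega : i' + 1 ≤ m) with hlt | heq
      · rw [hj', Function.update_of_ne (by omega : i' ≠ m),
          Function.update_of_ne (by omega : i' + 1 ≠ m)]
        exact hadm.2 i' hlt
      · have hieq : i' = m - 1 := by omega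
        rw [hj', hieq, Function.update_of_ne (by omega : m - 1 ≠ m),
          show m - 1 + 1 = m by omega, Function.update_self]
        omega
  have vol1 := cylinder_volume a b h ha hb hpos hab m hm j hadm
  have vol2 := cylinder_volume a b h ha hb hpos hab (m+1) (by omega) j' hadm'
  simp only [Nat.add_sub_cancel] at vol2
  set ρ : ℝ := ∏ i' ∈ Finset.range m, ((a i' (j i') : ℝ) / (b i' (j i') : ℝ)) with hρ
  have hρ0 : 0 < ρ := by
    rw [hρ]
    apply Finset.prod_pos
    intro i' hi'
    have h2 : 2 ≤ j i' := j_ge_two hpos hadm i' (Finset.mem_range.mp hi')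
    have := ha i' _ h2
    have := hb i' _ h2
    positivity
  have hprodsucc : (∏ i' ∈ Finset.range (m+1), ((a i' (j' i') : ℝ)/(b i' (j' i') : ℝ)))
      = ρ * ((a m J : ℝ)/(b m J : ℝ)) := by
    rw [Finset.prod_range_succ]
    congr 1
    · apply Finset.prod_congr rfl
      intro i' hi'
      have : i' ≠ m := by have := Finset.mem_range.mp hi'; omega
      rw [hj', Function.update_of_ne this]
    · rw [hj', Function.update_self]
  have hjm' : j' m = J := by rw [hj', Function.update_self]
  rw [hjm', hprodsucc] at vol2
  -- real number facts
  have hHR : (0:ℝ) < (H:ℝ) := by exact_mod_cast hHpos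
  have hHR1 : (1:ℝ) ≤ (H:ℝ) := by exact_mod_cast hHpos
  have hJR : (J:ℝ) = (H:ℝ) + (i:ℝ) := by rw [hJ]; push_cast; ring
  have hiR : (1:ℝ) ≤ (i:ℝ) := by exact_mod_cast hi
  have hJR2 : (2:ℝ) ≤ (J:ℝ) := by exact_mod_cast hJ2
  -- RHS equals ofReal (1/H)
  have hRHS : ((b (m - 1) (j (m - 1)) : ℝ) /
      ((a (m - 1) (j (m - 1)) : ℝ) * (j (m - 1) : ℝ) * ((j (m - 1) : ℝ) - 1)))
      = 1 / (H:ℝ) := by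
    have key := cast_key hjm (hab (m-1) _ hjm)
    rw [← hH] at key
    rw [← key, div_mul_eq_div_div, div_self (by
      exact_mod_cast (hb (m-1) _ hjm).ne' : ((b (m-1) (j (m-1)) : ℝ)) ≠ 0)]
  rw [hRHS, vol1, vol2]
  apply ENNReal.div_le_of_le_mul
  rw [← ENNReal.ofReal_mul (by positivity : (0:ℝ) ≤ 1/(H:ℝ))]
  apply ENNReal.ofReal_le_ofReal
  -- key real inequality
  have hident := ident hJ2 (ha m _ hJ2) (hb m _ hJ2) (hpos m _ hJ2) (hab m _ hJ2)
  have hJm1 : (1:ℝ) ≤ (J:ℝ) - 1 := by linarith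
  have e : 1/((J:ℝ)-1) - 1/(J:ℝ) = 1/((J:ℝ)*((J:ℝ)-1)) := by
    field_simp
    ring
  have h2 : 1/((J:ℝ)*((J:ℝ)-1)) ≤ 1/((H:ℝ)*(H:ℝ)) := by
    apply one_div_le_one_div_of_le (by positivity)
    nlinarith
  calc ρ * ((a m J : ℝ)/(b m J : ℝ)) * (1/(h m J : ℝ))
      = ρ * (1/((J:ℝ)*((J:ℝ)-1))) := by
        rw [mul_assoc, ← hident, e]
    _ ≤ ρ * (1/((H:ℝ)*(H:ℝ))) := mul_le_mul_of_nonneg_left h2 hρ0.le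
    _ = 1/(H:ℝ) * (ρ * (1/(H:ℝ))) := by ring

end ROE
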